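/- arXiv:2210.02192 — 2 statements merged into one kernel-verified Lean document; each statement's English description precedes it below -/
import Mathlib

section
/- For any critical point (W, H, b) of the regularized loss f(W,H,b) = g(WH + b1ᵀ) + (λ_W/2)‖W‖_F² + (λ_H/2)‖H‖_F² + (λ_b/2)‖b‖₂², the weights and features are balanced: λ_W·WᵀW = λ_H·HHᵀ. -/
open Matrix

/-- Balance between classifier weights and features at any critical point of
`f(W,H,b) = g(WH + b1ᵀ) + (λ_W/2)‖W‖_F² + (λ_H/2)‖H‖_F² + (λ_b/2)‖b‖₂²`:
writing `G = ∇g(WH + b1ᵀ)`, the critical point conditions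
`∇_W f = G Hᵀ + λ_W W = 0` and `∇_H f = Wᵀ G + λ_H H = 0`
imply the balance relation `λ_W WᵀW = λ_H HHᵀ`. -/
theorem critical_point_balance {K d N : ℕ}
    (lamW lamH lamb : ℝ) (hW : 0 < lamW) (hH : 0 < lamH) (hb : 0 < lamb)
    (W : Matrix (Fin K) (Fin d) ℝ) (H : Matrix (Fin d) (Fin N) ℝ) (b : Fin K → ℝ)
    (G : Matrix (Fin K) (Fin N) ℝ)
    (hcritW : G * Hᵀ + lamW • W = 0)
    (hcritH : Wᵀ * G + lamH • H = 0) :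
    lamW • (Wᵀ * W) = lamH • (H * Hᵀ) := by
  have h1 : G * Hᵀ = -(lamW • W) := by linear_combination (norm := abel) hcritW
  have h2 : Wᵀ * G = -(lamH • H) := by linear_combination (norm := abel) hcritH
  have key : Wᵀ * (G * Hᵀ) = (Wᵀ * G) * Hᵀ := (Matrix.mul_assoc _ _ _).symm
  rw [h1, h2] at key
  simp only [Matrix.mul_neg, Matrix.neg_mul, Matrix.mul_smul, Matrix.smul_mul, neg_inj] at key
  exact key
end

section
/- For any matrices W ∈ ℝ^{K×d} and H ∈ ℝ^{d×N} and positive reals λ_W, λ_H, the weighted sum of squared Frobenius norms dominates the nuclear norm of the product: (λ_W/2)‖W‖_F² + (λ_H/2)‖H‖_F² ≥ √(λ_W λ_H)·‖WH‖_*, where ‖·‖_* denotes the nuclear norm (sum of singular values). -/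
open Matrix

/-- Singular values of a real matrix `Z`: square roots of the eigenvalues of `Z Zᴴ`. -/
noncomputable def singVals {K N : ℕ} (Z : Matrix (Fin K) (Fin N) ℝ) : Fin K → ℝ :=
  fun i => Real.sqrt ((Matrix.isHermitian_mul_conjTranspose_self Z).eigenvalues i)

/-- Nuclear norm: sum of singular values. -/
noncomputable def nuclearNorm {K N : ℕ} (Z : Matrix (Fin K) (Fin N) ℝ) : ℝ :=
  ∑ i, singVals Z i

lemma sum_dotProduct' {n : ℕ} {ι : Type*} (s : Finset ι) (f : ι → Fin n → ℝ) (x : Fin n → ℝ) :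
    (∑ i ∈ s, f i) ⬝ᵥ x = ∑ i ∈ s, f i ⬝ᵥ x := by
  simp only [dotProduct, Finset.sum_apply, Finset.sum_mul]
  exact Finset.sum_comm

lemma dotProduct_sum' {n : ℕ} {ι : Type*} (s : Finset ι) (x : Fin n → ℝ) (f : ι → Fin n → ℝ) :
    x ⬝ᵥ (∑ i ∈ s, f i) = ∑ i ∈ s, x ⬝ᵥ f i := by
  simp only [dotProduct, Finset.sum_apply, Finset.mul_sum]
  exact Finset.sum_comm

lemma dot_self_nonneg {n : ℕ} (y : Fin n → ℝ) : 0 ≤ y ⬝ᵥ y := by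
  simp only [dotProduct]
  exact Finset.sum_nonneg fun k _ => mul_self_nonneg _

/-- Bessel's inequality for a finite orthonormal family, in dot-product form. -/
lemma bessel_dot {n : ℕ} {ι : Type*} [DecidableEq ι] (s : Finset ι) (v : ι → Fin n → ℝ)
    (h : ∀ i ∈ s, ∀ j ∈ s, v i ⬝ᵥ v j = if i = j then (1:ℝ) else 0)
    (x : Fin n → ℝ) : ∑ i ∈ s, (v i ⬝ᵥ x) ^ 2 ≤ x ⬝ᵥ x := by
  have hvz : ∀ i ∈ s, v i ⬝ᵥ (∑ j ∈ s, (v j ⬝ᵥ x) • v j) = v i ⬝ᵥ x := by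
    intro i hi
    rw [dotProduct_sum']
    rw [Finset.sum_eq_single i]
    · rw [dotProduct_smul, h i hi i hi]; simp
    · intro j hj hne
      rw [dotProduct_smul, h i hi j hj, if_neg (Ne.symm hne)]; simp
    · intro h'; exact absurd hi h'
  have hzx : (∑ j ∈ s, (v j ⬝ᵥ x) • v j) ⬝ᵥ x = ∑ i ∈ s, (v i ⬝ᵥ x) ^ 2 := by
    rw [sum_dotProduct']
    refine Finset.sum_congr rfl fun i hi => ?_
    rw [smul_dotProduct, smul_eq_mul, pow_two]
  have hxz : x ⬝ᵥ (∑ j ∈ s, (v j ⬝ᵥ x) • v j) = ∑ i ∈ s, (v i ⬝ᵥ x) ^ 2 := by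
    rw [dotProduct_comm]; exact hzx
  have hzz : (∑ j ∈ s, (v j ⬝ᵥ x) • v j) ⬝ᵥ (∑ j ∈ s, (v j ⬝ᵥ x) • v j)
      = ∑ i ∈ s, (v i ⬝ᵥ x) ^ 2 := by
    rw [sum_dotProduct']
    refine Finset.sum_congr rfl fun i hi => ?_
    rw [smul_dotProduct, smul_eq_mul, hvz i hi, pow_two]
  have key := dot_self_nonneg (x - ∑ j ∈ s, (v j ⬝ᵥ x) • v j)
  rw [sub_dotProduct, dotProduct_sub, dotProduct_sub, hzx, hxz, hzz] at key
  linarith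

/-- `(λ_W/2)‖W‖_F² + (λ_H/2)‖H‖_F² ≥ √(λ_W λ_H) ‖WH‖_*`. -/
theorem weighted_frobSq_ge_nuclearNorm {K d N : ℕ}
    (lamW lamH : ℝ) (hW : 0 < lamW) (hH : 0 < lamH)
    (W : Matrix (Fin K) (Fin d) ℝ) (H : Matrix (Fin d) (Fin N) ℝ) :
    lamW / 2 * ∑ i, ∑ j, (W i j) ^ 2 + lamH / 2 * ∑ i, ∑ j, (H i j) ^ 2 ≥
      Real.sqrt (lamW * lamH) * nuclearNorm (W * H) := by
  classical
  set Z : Matrix (Fin K) (Fin N) ℝ := W * H with hZdef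
  have hZ : (Z * Zᴴ).IsHermitian := Matrix.isHermitian_mul_conjTranspose_self Z
  set lam : Fin K → ℝ := hZ.eigenvalues with hlamdef
  set σ : Fin K → ℝ := fun i => Real.sqrt (lam i) with hσdef
  set u : Fin K → (Fin K → ℝ) := fun i => ⇑(hZ.eigenvectorBasis i) with hudef
  have hlam : ∀ i, 0 ≤ lam i := fun i =>
    Matrix.eigenvalues_self_mul_conjTranspose_nonneg Z i
  have hσ : ∀ i, 0 ≤ σ i := fun i => Real.sqrt_nonneg _
  have hσsq : ∀ i, σ i ^ 2 = lam i := fun i => Real.sq_sqrt (hlam i)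
  -- orthonormality of eigenvectors
  have huu : ∀ i j, u i ⬝ᵥ u j = if i = j then (1:ℝ) else 0 := by
    intro i j
    have h := (orthonormal_iff_ite (𝕜 := ℝ)).mp hZ.eigenvectorBasis.orthonormal i j
    simpa [PiLp.inner_apply, RCLike.inner_apply, dotProduct, starRingEnd_apply, hudef, mul_comm] using h
  have hZmul : ∀ i, Z *ᵥ (Zᴴ *ᵥ u i) = lam i • u i := by
    intro i
    rw [Matrix.mulVec_mulVec]
    exact hZ.mulVec_eigenvectorBasis i
  have hZt : Zᴴ = Zᵀ := by
    ext a b; simp [Matrix.conjTranspose_apply]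
  have adj : ∀ (a : Fin K → ℝ) (b : Fin N → ℝ), (Zᴴ *ᵥ a) ⬝ᵥ b = a ⬝ᵥ (Z *ᵥ b) := by
    intro a b
    rw [hZt, Matrix.mulVec_transpose, ← Matrix.dotProduct_mulVec]
  have hZZ : ∀ i j, (Zᴴ *ᵥ u i) ⬝ᵥ (Zᴴ *ᵥ u j) = lam j * (if i = j then (1:ℝ) else 0) := by
    intro i j
    rw [adj, hZmul j, dotProduct_smul, smul_eq_mul, huu i j]
  set S : Finset (Fin K) := Finset.univ.filter (fun i => 0 < lam i) with hSdef
  have hσpos : ∀ i ∈ S, 0 < σ i := by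
    intro i hi
    exact Real.sqrt_pos.mpr (Finset.mem_filter.mp hi).2
  set v : Fin K → (Fin N → ℝ) := fun i => (σ i)⁻¹ • (Zᴴ *ᵥ u i) with hvdef
  have hZZd : ∀ i, (Zᴴ *ᵥ u i) ⬝ᵥ (Zᴴ *ᵥ u i) = lam i := by
    intro i; rw [hZZ i i]; simp
  have hZZo : ∀ i j, i ≠ j → (Zᴴ *ᵥ u i) ⬝ᵥ (Zᴴ *ᵥ u j) = 0 := by
    intro i j hij; rw [hZZ i j]; simp [hij]
  have hvv : ∀ i ∈ S, ∀ j ∈ S, v i ⬝ᵥ v j = if i = j then (1:ℝ) else 0 := by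
    intro i hi j hj
    by_cases hij : i = j
    · subst hij
      have h1 : v i ⬝ᵥ v i = (σ i)⁻¹ * ((σ i)⁻¹ * lam i) := by
        rw [hvdef]
        simp only [smul_dotProduct, dotProduct_smul, smul_eq_mul, hZZd i]
      rw [h1, ← hσsq i, pow_two]
      have h2 : (σ i)⁻¹ * ((σ i)⁻¹ * (σ i * σ i)) = 1 := by
        field_simp [(hσpos i hi).ne']
      rw [h2]; simp
    · have h1 : v i ⬝ᵥ v j = (σ i)⁻¹ * ((σ j)⁻¹ * 0) := by
        rw [hvdef]
        simp only [smul_dotProduct, dotProduct_smul, smul_eq_mul, hZZo i j hij]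
        ring
      rw [h1]; simp [hij]
  set p : Fin K → (Fin d → ℝ) := fun i => Wᵀ *ᵥ u i with hpdef
  set q : Fin K → (Fin d → ℝ) := fun i => H *ᵥ v i with hqdef
  have hZv : ∀ i ∈ S, Z *ᵥ v i = σ i • u i := by
    intro i hi
    rw [hvdef]
    simp only
    rw [Matrix.mulVec_smul, hZmul i, smul_smul]
    congr 1
    rw [show lam i = σ i ^ 2 from (hσsq i).symm]
    field_simp [(hσpos i hi).ne']
  have hσeq : ∀ i ∈ S, p i ⬝ᵥ q i = σ i := by
    intro i hi
    have h1 : p i ⬝ᵥ q i = u i ⬝ᵥ (Z *ᵥ v i) := by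
      rw [hpdef, hqdef]
      simp only
      rw [Matrix.mulVec_transpose, ← Matrix.dotProduct_mulVec, Matrix.mulVec_mulVec, ← hZdef]
    rw [h1, hZv i hi, dotProduct_smul, smul_eq_mul, huu i i, if_pos rfl, mul_one]
  have hkey : ∀ i ∈ S, Real.sqrt (lamW * lamH) * σ i
      ≤ lamW / 2 * (p i ⬝ᵥ p i) + lamH / 2 * (q i ⬝ᵥ q i) := by
    intro i hi
    have hCS : (p i ⬝ᵥ q i) ^ 2 ≤ (p i ⬝ᵥ p i) * (q i ⬝ᵥ q i) := by
      have h := Finset.sum_mul_sq_le_sq_mul_sq Finset.univ (p i) (q i)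
      simpa [dotProduct, pow_two] using h
    rw [hσeq i hi] at hCS
    have hA : 0 ≤ p i ⬝ᵥ p i := dot_self_nonneg _
    have hB : 0 ≤ q i ⬝ᵥ q i := dot_self_nonneg _
    set A : ℝ := p i ⬝ᵥ p i with hAdef
    set B : ℝ := q i ⬝ᵥ q i with hBdef
    have step1 : Real.sqrt ((lamW * lamH) * σ i ^ 2) = Real.sqrt (lamW * lamH) * σ i := by
      rw [Real.sqrt_mul (by positivity : (0:ℝ) ≤ lamW * lamH), Real.sqrt_sq (hσ i)]
    have step2 : (lamW * lamH) * σ i ^ 2 ≤ (lamW * A) * (lamH * B) := by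
      have h1 : (lamW * lamH) * σ i ^ 2 ≤ (lamW * lamH) * (A * B) :=
        mul_le_mul_of_nonneg_left hCS (by positivity)
      have h2 : (lamW * lamH) * (A * B) = (lamW * A) * (lamH * B) := by ring
      linarith
    have step3 : Real.sqrt ((lamW * A) * (lamH * B))
        = Real.sqrt (lamW * A) * Real.sqrt (lamH * B) :=
      Real.sqrt_mul (by positivity) _
    have ha2 : Real.sqrt (lamW * A) ^ 2 = lamW * A := Real.sq_sqrt (by positivity)
    have hb2 : Real.sqrt (lamH * B) ^ 2 = lamH * B := Real.sq_sqrt (by positivity)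
    have step4 : 2 * (Real.sqrt (lamW * A) * Real.sqrt (lamH * B))
        ≤ Real.sqrt (lamW * A) ^ 2 + Real.sqrt (lamH * B) ^ 2 := by
      nlinarith [sq_nonneg (Real.sqrt (lamW * A) - Real.sqrt (lamH * B))]
    have step5 : Real.sqrt ((lamW * lamH) * σ i ^ 2)
        ≤ Real.sqrt ((lamW * A) * (lamH * B)) := Real.sqrt_le_sqrt step2
    rw [← step1]
    rw [ha2, hb2] at step4
    calc Real.sqrt ((lamW * lamH) * σ i ^ 2)
        ≤ Real.sqrt ((lamW * A) * (lamH * B)) := step5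
      _ = Real.sqrt (lamW * A) * Real.sqrt (lamH * B) := step3
      _ ≤ lamW / 2 * A + lamH / 2 * B := by linarith
  have hpsum : ∑ i ∈ S, p i ⬝ᵥ p i ≤ ∑ i, ∑ j, (W i j) ^ 2 := by
    calc ∑ i ∈ S, p i ⬝ᵥ p i = ∑ i ∈ S, ∑ j, (u i ⬝ᵥ Wᵀ j) ^ 2 := by
          refine Finset.sum_congr rfl fun i _ => ?_
          rw [hpdef]
          simp only [dotProduct, Matrix.mulVec, pow_two]
          refine Finset.sum_congr rfl fun j _ => ?_
          congr 1 <;> exact Finset.sum_congr rfl fun k _ => mul_comm _ _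
      _ = ∑ j, ∑ i ∈ S, (u i ⬝ᵥ Wᵀ j) ^ 2 := Finset.sum_comm
      _ ≤ ∑ j, (Wᵀ j ⬝ᵥ Wᵀ j) :=
          Finset.sum_le_sum fun j _ => bessel_dot S u (fun i _ j _ => huu i j) (Wᵀ j)
      _ = ∑ i, ∑ j, (W i j) ^ 2 := by
          simp only [dotProduct, Matrix.transpose_apply, ← pow_two]
          exact Finset.sum_comm
  have hqsum : ∑ i ∈ S, q i ⬝ᵥ q i ≤ ∑ i, ∑ j, (H i j) ^ 2 := by
    calc ∑ i ∈ S, q i ⬝ᵥ q i = ∑ i ∈ S, ∑ j, (v i ⬝ᵥ H j) ^ 2 := by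
          refine Finset.sum_congr rfl fun i _ => ?_
          rw [hqdef]
          simp only [dotProduct, Matrix.mulVec, pow_two]
          refine Finset.sum_congr rfl fun j _ => ?_
          congr 1 <;> exact Finset.sum_congr rfl fun k _ => mul_comm _ _
      _ = ∑ j, ∑ i ∈ S, (v i ⬝ᵥ H j) ^ 2 := Finset.sum_comm
      _ ≤ ∑ j, (H j ⬝ᵥ H j) :=
          Finset.sum_le_sum fun j _ => bessel_dot S v hvv (H j)
      _ = ∑ i, ∑ j, (H i j) ^ 2 := by
          simp only [dotProduct, ← pow_two]
  have hnuc : nuclearNorm Z = ∑ i ∈ S, σ i := by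
    rw [nuclearNorm]
    refine (Finset.sum_subset (Finset.subset_univ S) fun i _ hiS => ?_).symm
    have : lam i = 0 := by
      by_contra h'
      exact hiS (Finset.mem_filter.mpr ⟨Finset.mem_univ i, lt_of_le_of_ne (hlam i) (Ne.symm h')⟩)
    show Real.sqrt _ = 0
    rw [show (Matrix.isHermitian_mul_conjTranspose_self Z).eigenvalues i = lam i from rfl, this,
      Real.sqrt_zero]
  rw [ge_iff_le]
  calc Real.sqrt (lamW * lamH) * nuclearNorm Z
      = ∑ i ∈ S, Real.sqrt (lamW * lamH) * σ i := by rw [hnuc, Finset.mul_sum]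
    _ ≤ ∑ i ∈ S, (lamW / 2 * (p i ⬝ᵥ p i) + lamH / 2 * (q i ⬝ᵥ q i)) :=
        Finset.sum_le_sum hkey
    _ = lamW / 2 * ∑ i ∈ S, (p i ⬝ᵥ p i) + lamH / 2 * ∑ i ∈ S, (q i ⬝ᵥ q i) := by
        rw [Finset.sum_add_distrib, Finset.mul_sum, Finset.mul_sum]
    _ ≤ lamW / 2 * ∑ i, ∑ j, (W i j) ^ 2 + lamH / 2 * ∑ i, ∑ j, (H i j) ^ 2 := by
        gcongr
end
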